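/- For every real λ ≠ 0, the function x ↦ (exp(i λ x²) − 1) · log |x/(x−1)| is not in L¹(ℝ); that is, ∫_ℝ |exp(i λ x²) − 1| · | log |x/(x−1)| | dx = +∞. Consequently, if f = 𝟙_{[0,1]} and H denotes the Hilbert transform (so Hf(x) = (1/π) log |x/(x−1)| for x ∉ {0,1}), then the chirp-modulated difference (exp(i λ (·)²) − 1) · Hf has infinite L¹(ℝ) norm, so the linear canonical Hilbert transform of f does not converge to Hf in L¹(ℝ) as the chirp parameter λ → 0 through nonzero values. -/

import Mathlib

open MeasureTheory Filter Topology
open scoped ENNReal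
open intervalIntegral



lemma parts_bound (l : ℝ) (hl : l ≠ 0) (S : ℝ) (hS : 4 ≤ S) :
    |∫ u in (4:ℝ)..S, Real.cos (l * u) / (2*u)| ≤ 3/(8*|l|) := by
  set u : ℝ → ℝ := fun t => 1/(2*t) with hu_def
  set u' : ℝ → ℝ := fun t => -(1/(2*t^2)) with hu'_def
  set v : ℝ → ℝ := fun t => Real.sin (l*t)/l with hv_def
  set v' : ℝ → ℝ := fun t => Real.cos (l*t) with hv'_def
  have hmem : ∀ t ∈ Set.uIcc (4:ℝ) S, 4 ≤ t := by
    intro t ht; rw [Set.uIcc_of_le hS] at ht; exact ht.1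
  have hu : ∀ t ∈ Set.uIcc (4:ℝ) S, HasDerivAt u (u' t) t := by
    intro t ht
    have ht4 := hmem t ht
    have ht0 : t ≠ 0 := by positivity -- wrong; fix below
    have h := ((hasDerivAt_inv ht0).const_mul (1/2 : ℝ))
    convert h using 1
    · rfl
    · rfl
    · ext s; simp [hu_def, one_div]; ring
    · simp [hu'_def]; field_simp
  have hv : ∀ t ∈ Set.uIcc (4:ℝ) S, HasDerivAt v (v' t) t := by
    intro t ht
    have h := ((Real.hasDerivAt_sin (l*t)).comp t ((hasDerivAt_id t).const_mul l)).div_const l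
    convert h using 1
    · rfl
    · rfl
    · rfl
    simp [hv'_def]
    field_simp
  have hcont_u' : ContinuousOn u' (Set.uIcc (4:ℝ) S) := by
    apply ContinuousOn.neg
    apply ContinuousOn.div continuousOn_const (by fun_prop)
    intro t ht
    have := hmem t ht
    positivity
  have hu'int : IntervalIntegrable u' volume 4 S := hcont_u'.intervalIntegrable
  have hv'int : IntervalIntegrable v' volume 4 S := (by fun_prop : Continuous v').intervalIntegrable _ _
  have hparts := integral_mul_deriv_eq_deriv_mul hu hv hu'int hv'int
  have heq : (∫ t in (4:ℝ)..S, Real.cos (l * t) / (2*t)) = ∫ t in (4:ℝ)..S, u t * v' t := by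
    apply integral_congr
    intro t ht
    simp [hu_def, hv'_def]; ring
  rw [heq, hparts]
  have hl' : 0 < |l| := abs_pos.mpr hl
  have hS0 : (0:ℝ) < S := by linarith
  have hvabs : ∀ t : ℝ, |v t| ≤ 1/|l| := by
    intro t
    have : v t = Real.sin (l*t)/l := rfl
    rw [this, abs_div, div_le_div_iff₀ hl' hl', one_mul]
    calc |Real.sin (l*t)| * |l| ≤ 1 * |l| := by
          apply mul_le_mul_of_nonneg_right (abs_le.mpr ⟨Real.neg_one_le_sin _, Real.sin_le_one _⟩) (le_of_lt hl')
      _ = |l| := one_mul _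
  have huS : |u S| ≤ 1/8 := by
    have h1 : u S = 1/(2*S) := rfl
    rw [h1, abs_of_pos (by positivity)]
    rw [div_le_div_iff₀ (by positivity) (by norm_num)]
    linarith
  have hI3 : |∫ t in (4:ℝ)..S, u' t * v t| ≤ 1/(8*|l|) := by
    have hle : ∀ t ∈ Set.Icc (4:ℝ) S, |u' t * v t| ≤ (1/(2*|l|)) * (t:ℝ) ^ (-2 : ℤ) := by
      intro t ht
      have ht4 : (4:ℝ) ≤ t := ht.1
      have ht0 : (0:ℝ) < t := by linarith
      rw [abs_mul]
      have h1 : |u' t| = (1/2) * t ^ (-2:ℤ) := by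
        have he : u' t = -(1/(2*t^2)) := rfl
        rw [he, abs_neg, abs_of_pos (by positivity)]
        have hz : (t:ℝ)^(-2:ℤ) = (t^2)⁻¹ := by
          rw [zpow_neg]; norm_cast
        rw [hz]
        field_simp
      rw [h1]
      have h2 := hvabs t
      have ht2 : (0:ℝ) < (t:ℝ) ^ (-2:ℤ) := by positivity
      calc (1/2) * t^(-2:ℤ) * |v t| ≤ (1/2) * t^(-2:ℤ) * (1/|l|) := by
            apply mul_le_mul_of_nonneg_left h2 (by positivity)
        _ = (1/(2*|l|)) * t^(-2:ℤ) := by field_simp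
    have hintuv : IntervalIntegrable (fun t => |u' t * v t|) volume 4 S := by
      apply ContinuousOn.intervalIntegrable
      apply ContinuousOn.abs
      apply ContinuousOn.mul hcont_u'
      apply Continuous.continuousOn
      fun_prop
    have hintg : IntervalIntegrable (fun t : ℝ => (1/(2*|l|)) * t ^ (-2:ℤ)) volume 4 S := by
      apply ContinuousOn.intervalIntegrable
      apply ContinuousOn.mul continuousOn_const
      apply ContinuousOn.zpow₀ (continuousOn_id)
      intro t ht
      left
      have := hmem t ht
      positivity
    calc |∫ t in (4:ℝ)..S, u' t * v t| ≤ ∫ t in (4:ℝ)..S, |u' t * v t| :=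
          abs_integral_le_integral_abs hS
      _ ≤ ∫ t in (4:ℝ)..S, (1/(2*|l|)) * t ^ (-2:ℤ) := integral_mono_on hS hintuv hintg hle
      _ = (1/(2*|l|)) * ((S ^ (-1:ℤ) - 4 ^ (-1:ℤ)) / (-1:ℤ)) := by
          rw [intervalIntegral.integral_const_mul, integral_zpow]
          · norm_num
          · right
            constructor
            · norm_num
            · rw [Set.uIcc_of_le hS]
              intro h
              have := h.1
              norm_num at this
      _ ≤ 1/(8*|l|) := by
          have hS1 : S ^ (-1:ℤ) = 1/S := by simp [zpow_neg]
          have h4 : ((4:ℝ):ℝ) ^ (-1:ℤ) = 1/4 := by norm_num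
          rw [hS1, h4]
          have hc : ((1:ℝ)/S - 1/4)/(((-1:ℤ)):ℝ) = 1/4 - 1/S := by push_cast; ring
          rw [hc]
          have hS' : (0:ℝ) < 1/S := by positivity
          calc 1/(2*|l|) * (1/4 - 1/S) ≤ 1/(2*|l|) * (1/4) := by
                apply mul_le_mul_of_nonneg_left (by linarith) (by positivity)
            _ = 1/(8*|l|) := by field_simp; ring
  calc |u S * v S - u 4 * v 4 - ∫ t in (4:ℝ)..S, u' t * v t|
      ≤ |u S * v S| + |u 4 * v 4| + |∫ t in (4:ℝ)..S, u' t * v t| := by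
        have h1 := abs_add_le (u S * v S - u 4 * v 4) (-(∫ t in (4:ℝ)..S, u' t * v t))
        have h2 := abs_add_le (u S * v S) (-(u 4 * v 4))
        simp only [← sub_eq_add_neg, abs_neg] at h1 h2
        have h3 : 1/(8*|l|)+1/(8*|l|)+1/(8*|l|) = 3/(8*|l|) := by ring
        linarith
    _ ≤ 3/(8*|l|) := by
        have h1 : |u S * v S| ≤ 1/(8*|l|) := by
          rw [abs_mul]
          calc |u S| * |v S| ≤ (1/8) * (1/|l|) :=
                mul_le_mul huS (hvabs S) (abs_nonneg _) (by norm_num)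
            _ = 1/(8*|l|) := by field_simp
        have h2 : |u 4 * v 4| ≤ 1/(8*|l|) := by
          rw [abs_mul]
          have hu4 : |u 4| = 1/8 := by
            simp only [hu_def]
            norm_num
          calc |u 4| * |v 4| ≤ (1/8) * (1/|l|) := by
                rw [hu4]
                exact mul_le_mul_of_nonneg_left (hvabs 4) (by norm_num)
            _ = 1/(8*|l|) := by field_simp
        have h3 : 1/(8*|l|)+1/(8*|l|)+1/(8*|l|) = 3/(8*|l|) := by ring
        linarith
lemma subst_sq (l : ℝ) (T : ℝ) (hT : 2 ≤ T) :
    ∫ x in (2:ℝ)..T, Real.cos (l * x^2) / x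
      = ∫ u in (4:ℝ)..T^2, Real.cos (l * u) / (2*u) := by
  have h1 : ∀ x ∈ Set.uIcc (2:ℝ) T, HasDerivAt (fun x : ℝ => x^2) (2*x) x := by
    intro x hx
    simpa [mul_comm] using (hasDerivAt_pow 2 x)
  have h2 : ContinuousOn (fun x : ℝ => 2*x) (Set.uIcc (2:ℝ) T) := by fun_prop
  have h3 : ContinuousOn (fun u : ℝ => Real.cos (l * u) / (2*u))
      ((fun x : ℝ => x^2) '' Set.uIcc (2:ℝ) T) := by
    apply ContinuousOn.div (by fun_prop) (by fun_prop)
    rintro u ⟨x, hx, rfl⟩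
    have hx2 : 2 ≤ x := by
      rw [Set.uIcc_of_le hT] at hx; exact hx.1
    have hx0 : (0:ℝ) < x := by linarith
    simp only []
    positivity
  have := integral_comp_smul_deriv' h1 h2 h3
  simp only [smul_eq_mul] at this
  rw [show ((2:ℝ))^2 = 4 by norm_num] at this
  rw [← this]
  apply integral_congr
  intro x hx
  have hx2 : 2 ≤ x := by rw [Set.uIcc_of_le hT] at hx; exact hx.1
  field_simp
  simp only [Function.comp_apply]
  field_simp

lemma abs_exp_sub_one_ge (θ : ℝ) :
    1 - Real.cos θ ≤ ‖Complex.exp (Complex.I * θ) - 1‖ := by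
  have h : Complex.exp (Complex.I * θ) - 1 =
      Complex.mk (Real.cos θ - 1) (Real.sin θ) := by
    rw [mul_comm, Complex.exp_mul_I]
    apply Complex.ext <;> simp [Complex.cos_ofReal_re, Complex.sin_ofReal_re]
  rw [h, Complex.norm_def, Complex.normSq_mk]
  have h2 : (1 - Real.cos θ)^2 ≤ (Real.cos θ - 1) * (Real.cos θ - 1) + Real.sin θ * Real.sin θ := by
    have := Real.sin_sq_add_cos_sq θ
    have := Real.neg_one_le_cos θ
    nlinarith
  calc 1 - Real.cos θ = Real.sqrt ((1 - Real.cos θ)^2) := by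
        rw [Real.sqrt_sq_eq_abs]; rw [abs_of_nonneg]; linarith [Real.cos_le_one θ]
    _ ≤ _ := Real.sqrt_le_sqrt h2


lemma cos_osc_bound (l : ℝ) (hl : l ≠ 0) (T : ℝ) (hT : 2 ≤ T) :
    |∫ x in (2:ℝ)..T, Real.cos (l * x^2) / x| ≤ 3/(8*|l|) := by
  rw [subst_sq l T hT]
  exact parts_bound l hl (T^2) (by nlinarith)

lemma lower_int (l : ℝ) (hl : l ≠ 0) (T : ℝ) (hT : 2 ≤ T) :
    Real.log T - Real.log 2 - 3/(8*|l|)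
      ≤ ∫ x in (2:ℝ)..T, (1 - Real.cos (l * x^2)) / x := by
  have hmem : ∀ x ∈ Set.uIcc (2:ℝ) T, 2 ≤ x := by
    intro x hx; rw [Set.uIcc_of_le hT] at hx; exact hx.1
  have hne : ∀ x ∈ Set.uIcc (2:ℝ) T, x ≠ 0 := fun x hx => by
    have := hmem x hx; positivity
  have hint1 : IntervalIntegrable (fun x : ℝ => 1/x) volume 2 T := by
    apply ContinuousOn.intervalIntegrable
    exact ContinuousOn.div continuousOn_const continuousOn_id hne
  have hint2 : IntervalIntegrable (fun x : ℝ => Real.cos (l * x^2)/x) volume 2 T := by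
    apply ContinuousOn.intervalIntegrable
    exact ContinuousOn.div (by fun_prop) continuousOn_id hne
  have hsplit : (∫ x in (2:ℝ)..T, (1 - Real.cos (l * x^2)) / x)
      = (∫ x in (2:ℝ)..T, 1/x) - ∫ x in (2:ℝ)..T, Real.cos (l * x^2)/x := by
    rw [← intervalIntegral.integral_sub hint1 hint2]
    apply intervalIntegral.integral_congr
    intro x hx
    have := hne x hx
    field_simp
  rw [hsplit]
  have h1 : (∫ x in (2:ℝ)..T, 1/x) = Real.log (T/2) := by
    apply integral_one_div
    intro h
    rw [Set.uIcc_of_le hT] at h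
    have := h.1
    norm_num at this
  rw [h1, Real.log_div (by linarith) (by norm_num)]
  have := abs_le.mp (cos_osc_bound l hl T hT)
  linarith [this.2]

lemma lint_g_top (l : ℝ) (hl : l ≠ 0) :
    ∫⁻ x in Set.Ioi (2:ℝ), ENNReal.ofReal ((1 - Real.cos (l * x^2)) / x) = ⊤ := by
  by_contra hC
  set C := ∫⁻ x in Set.Ioi (2:ℝ), ENNReal.ofReal ((1 - Real.cos (l * x^2)) / x) with hCdef
  have hClt : C < ⊤ := lt_top_iff_ne_top.mpr hC
  have key : ∀ T : ℝ, 2 ≤ T →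
      ENNReal.ofReal (∫ x in (2:ℝ)..T, (1 - Real.cos (l * x^2)) / x) ≤ C := by
    intro T hT
    have hioc : (∫ x in (2:ℝ)..T, (1 - Real.cos (l * x^2)) / x)
        = ∫ x in Set.Ioc (2:ℝ) T, (1 - Real.cos (l * x^2)) / x := by
      rw [intervalIntegral.integral_of_le hT]
    rw [hioc]
    have hcont : ContinuousOn (fun x : ℝ => (1 - Real.cos (l * x^2)) / x)
        (Set.Icc (2:ℝ) T) := by
      apply ContinuousOn.div (by fun_prop) continuousOn_id
      intro x hx
      have h2 := hx.1
      intro h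
      have : x = 0 := h
      linarith
    have hInt : IntegrableOn (fun x : ℝ => (1 - Real.cos (l * x^2)) / x)
        (Set.Ioc (2:ℝ) T) volume := by
      apply (hcont.integrableOn_compact isCompact_Icc).mono_set Set.Ioc_subset_Icc_self
    have hnn : 0 ≤ᵐ[volume.restrict (Set.Ioc (2:ℝ) T)]
        fun x : ℝ => (1 - Real.cos (l * x^2)) / x := by
      apply (ae_restrict_iff' measurableSet_Ioc).mpr
      apply Filter.Eventually.of_forall
      intro x hx
      have hx2 : (2:ℝ) < x := hx.1
      have hc := Real.cos_le_one (l * x^2)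
      apply div_nonneg (by linarith) (by linarith)
    calc ENNReal.ofReal (∫ x in Set.Ioc (2:ℝ) T, (1 - Real.cos (l * x^2)) / x)
        = ∫⁻ x in Set.Ioc (2:ℝ) T, ENNReal.ofReal ((1 - Real.cos (l * x^2)) / x) :=
          MeasureTheory.ofReal_integral_eq_lintegral_ofReal hInt hnn
      _ ≤ C := lintegral_mono_set Set.Ioc_subset_Ioi_self
  -- choose T large
  set M := C.toReal + Real.log 2 + 3/(8*|l|) + 1 with hM
  set T := max 2 (Real.exp M) with hT
  have hT2 : (2:ℝ) ≤ T := le_max_left _ _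
  have hTM : Real.exp M ≤ T := le_max_right _ _
  have hlog : M ≤ Real.log T := by
    calc M = Real.log (Real.exp M) := (Real.log_exp M).symm
      _ ≤ Real.log T := Real.log_le_log (Real.exp_pos M) hTM
  have h1 := key T hT2
  have h2 := lower_int l hl T hT2
  have h3 : Real.log T - Real.log 2 - 3/(8*|l|)
      ≤ (∫ x in (2:ℝ)..T, (1 - Real.cos (l * x^2)) / x) := h2
  have h4 : C.toReal + 1 ≤ ∫ x in (2:ℝ)..T, (1 - Real.cos (l * x^2)) / x := by
    rw [hM] at hlog; linarith
  have h5 : ENNReal.ofReal (C.toReal + 1) ≤ C :=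
    le_trans (ENNReal.ofReal_le_ofReal h4) h1
  have h6 : C.toReal + 1 ≤ C.toReal := by
    have := ENNReal.toReal_mono (ne_of_lt hClt) h5
    rwa [ENNReal.toReal_ofReal (by positivity)] at this
  linarith

lemma pointwise_lower (l : ℝ) (x : ℝ) (hx : 2 < x) :
    (1 - Real.cos (l * x^2)) / x ≤
      ‖Complex.exp (Complex.I * ((l * x ^ 2 : ℝ) : ℂ)) - 1‖ *
        |Real.log (|x / (x - 1)|)| := by
  have hx0 : (0:ℝ) < x := by linarith
  have hx1 : (0:ℝ) < x - 1 := by linarith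
  have habs : |x / (x-1)| = x/(x-1) := abs_of_pos (by positivity)
  have hlog : 1/x ≤ Real.log (x/(x-1)) := by
    have h1 := Real.log_le_sub_one_of_pos (show (0:ℝ) < (x-1)/x by positivity)
    have h2 : Real.log ((x-1)/x) = Real.log (x-1) - Real.log x :=
      Real.log_div (by linarith) (by positivity)
    have h3 : Real.log (x/(x-1)) = Real.log x - Real.log (x-1) :=
      Real.log_div (by positivity) (by linarith)
    have h4 : (x-1)/x - 1 = -(1/x) := by field_simp; ring
    rw [h2, h4] at h1
    rw [h3]
    linarith
  have hlogpos : 0 < Real.log (x/(x-1)) := lt_of_lt_of_le (by positivity) hlog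
  have h5 : |Real.log (|x/(x-1)|)| = Real.log (x/(x-1)) := by
    rw [habs, abs_of_pos hlogpos]
  rw [h5, div_eq_mul_one_div]
  have hcos := abs_exp_sub_one_ge (l * x^2)
  have hcosle := Real.cos_le_one (l * x^2)
  apply mul_le_mul hcos (le_trans (le_refl _) hlog) (by positivity) (norm_nonneg _)

lemma main_lintegral_top (l : ℝ) (hl : l ≠ 0) :
    (∫⁻ x : ℝ, ENNReal.ofReal
        (‖Complex.exp (Complex.I * ((l * x ^ 2 : ℝ) : ℂ)) - 1‖ *
          |Real.log (|x / (x - 1)|)|) = ⊤) := by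
  rw [eq_top_iff]
  calc (⊤ : ℝ≥0∞) = ∫⁻ x in Set.Ioi (2:ℝ), ENNReal.ofReal ((1 - Real.cos (l * x^2)) / x) :=
        (lint_g_top l hl).symm
    _ ≤ ∫⁻ x in Set.Ioi (2:ℝ), ENNReal.ofReal
        (‖Complex.exp (Complex.I * ((l * x ^ 2 : ℝ) : ℂ)) - 1‖ *
          |Real.log (|x / (x - 1)|)|) := by
        apply setLIntegral_mono' measurableSet_Ioi
        intro x hx
        exact ENNReal.ofReal_le_ofReal (pointwise_lower l x hx)
    _ ≤ _ := setLIntegral_le_lintegral _ _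

lemma norm_eq_mul (l x r : ℝ) :
    ‖(Complex.exp (Complex.I * ((l * x ^ 2 : ℝ) : ℂ)) - 1) * ((r:ℝ):ℂ)‖
      = ‖Complex.exp (Complex.I * ((l * x ^ 2 : ℝ) : ℂ)) - 1‖ * |r| := by
  rw [norm_mul, Complex.norm_real, Real.norm_eq_abs]

/-- For every real `λ ≠ 0`, the function
`x ↦ (exp(i λ x²) − 1) log |x/(x−1)|` is not in `L¹(ℝ)`: its absolute-value integral
is `+∞`. Consequently, for `f = 𝟙_{[0,1]}` with Hilbert transform
`Hf(x) = (1/π) log |x/(x−1)|` (for `x ∉ {0,1}`), the chirp-modulated difference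
`(exp(i λ ·²) − 1) · Hf` has infinite `L¹(ℝ)` norm, so the linear canonical Hilbert
transform of `f` does not converge to `Hf` in `L¹(ℝ)` as `λ → 0` through nonzero
values. -/
theorem chirp_modulated_hilbert_not_L1 :
    (∀ l : ℝ, l ≠ 0 →
      (∫⁻ x : ℝ, ENNReal.ofReal
          (‖Complex.exp (Complex.I * ((l * x ^ 2 : ℝ) : ℂ)) - 1‖ *
            |Real.log (|x / (x - 1)|)|) = ⊤) ∧
      ¬ Integrable (fun x : ℝ =>
          (Complex.exp (Complex.I * ((l * x ^ 2 : ℝ) : ℂ)) - 1) *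
            ((Real.log |x / (x - 1)| : ℝ) : ℂ)) ∧
      eLpNorm (fun x : ℝ =>
          (Complex.exp (Complex.I * ((l * x ^ 2 : ℝ) : ℂ)) - 1) *
            (((1 / Real.pi) * Real.log |x / (x - 1)| : ℝ) : ℂ)) 1 volume = ⊤) ∧
    ¬ Tendsto (fun l : ℝ =>
        eLpNorm (fun x : ℝ =>
          (Complex.exp (Complex.I * ((l * x ^ 2 : ℝ) : ℂ)) - 1) *
            (((1 / Real.pi) * Real.log |x / (x - 1)| : ℝ) : ℂ)) 1 volume)
      (𝓝[≠] (0 : ℝ)) (𝓝 0) := by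
  have hmain : ∀ l : ℝ, l ≠ 0 →
      (∫⁻ x : ℝ, ENNReal.ofReal
          (‖Complex.exp (Complex.I * ((l * x ^ 2 : ℝ) : ℂ)) - 1‖ *
            |Real.log (|x / (x - 1)|)|) = ⊤) ∧
      ¬ Integrable (fun x : ℝ =>
          (Complex.exp (Complex.I * ((l * x ^ 2 : ℝ) : ℂ)) - 1) *
            ((Real.log |x / (x - 1)| : ℝ) : ℂ)) ∧
      eLpNorm (fun x : ℝ =>
          (Complex.exp (Complex.I * ((l * x ^ 2 : ℝ) : ℂ)) - 1) *
            (((1 / Real.pi) * Real.log |x / (x - 1)| : ℝ) : ℂ)) 1 volume = ⊤ := by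
    intro l hl
    have ha := main_lintegral_top l hl
    refine ⟨ha, ?_, ?_⟩
    · intro hInt
      have hfin := hInt.hasFiniteIntegral
      rw [HasFiniteIntegral] at hfin
      have heq : (∫⁻ x : ℝ, (‖(Complex.exp (Complex.I * ((l * x ^ 2 : ℝ) : ℂ)) - 1) *
            ((Real.log |x / (x - 1)| : ℝ) : ℂ)‖ₑ))
          = ∫⁻ x : ℝ, ENNReal.ofReal
            (‖Complex.exp (Complex.I * ((l * x ^ 2 : ℝ) : ℂ)) - 1‖ *
              |Real.log (|x / (x - 1)|)|) := by
        apply lintegral_congr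
        intro x
        rw [← ofReal_norm_eq_enorm, norm_eq_mul]
      rw [heq, ha] at hfin
      exact (lt_irrefl _ hfin).elim
    · rw [eLpNorm_one_eq_lintegral_enorm]
      have heq : ∀ x : ℝ, (‖(Complex.exp (Complex.I * ((l * x ^ 2 : ℝ) : ℂ)) - 1) *
            (((1 / Real.pi) * Real.log |x / (x - 1)| : ℝ) : ℂ)‖ₑ)
          = ENNReal.ofReal (1/Real.pi) * ENNReal.ofReal
            (‖Complex.exp (Complex.I * ((l * x ^ 2 : ℝ) : ℂ)) - 1‖ *
              |Real.log (|x / (x - 1)|)|) := by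
        intro x
        rw [← ofReal_norm_eq_enorm, norm_eq_mul]
        rw [abs_mul, abs_of_pos (by positivity : (0:ℝ) < 1/Real.pi)]
        rw [← ENNReal.ofReal_mul (by positivity)]
        congr 1
        ring
      calc (∫⁻ x : ℝ, (‖(Complex.exp (Complex.I * ((l * x ^ 2 : ℝ) : ℂ)) - 1) *
            (((1 / Real.pi) * Real.log |x / (x - 1)| : ℝ) : ℂ)‖ₑ))
          = ∫⁻ x : ℝ, ENNReal.ofReal (1/Real.pi) * ENNReal.ofReal
            (‖Complex.exp (Complex.I * ((l * x ^ 2 : ℝ) : ℂ)) - 1‖ *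
              |Real.log (|x / (x - 1)|)|) := lintegral_congr heq
        _ = ENNReal.ofReal (1/Real.pi) * ∫⁻ x : ℝ, ENNReal.ofReal
            (‖Complex.exp (Complex.I * ((l * x ^ 2 : ℝ) : ℂ)) - 1‖ *
              |Real.log (|x / (x - 1)|)|) :=
            lintegral_const_mul' _ _ ENNReal.ofReal_ne_top
        _ = ⊤ := by
            rw [ha, ENNReal.mul_top]
            simp only [ne_eq, ENNReal.ofReal_eq_zero, not_le]
            positivity
  refine ⟨hmain, ?_⟩
  intro hT
  have h1 : ∀ᶠ l in 𝓝[≠] (0:ℝ),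
      eLpNorm (fun x : ℝ =>
          (Complex.exp (Complex.I * ((l * x ^ 2 : ℝ) : ℂ)) - 1) *
            (((1 / Real.pi) * Real.log |x / (x - 1)| : ℝ) : ℂ)) 1 volume < 1 :=
    hT.eventually_lt_const (by norm_num : (0:ℝ≥0∞) < 1)
  have h2 : ∀ᶠ l in 𝓝[≠] (0:ℝ),
      eLpNorm (fun x : ℝ =>
          (Complex.exp (Complex.I * ((l * x ^ 2 : ℝ) : ℂ)) - 1) *
            (((1 / Real.pi) * Real.log |x / (x - 1)| : ℝ) : ℂ)) 1 volume = ⊤ := by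
    filter_upwards [self_mem_nhdsWithin] with l hl
    exact (hmain l hl).2.2
  obtain ⟨l, hlt, htop⟩ := (h1.and h2).exists
  rw [htop] at hlt
  exact (lt_irrefl _ (lt_trans hlt (by norm_num : (1:ℝ≥0∞) < ⊤))).elim
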